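/- arXiv:2211.11091 — 2 statements merged into one kernel-verified Lean document; each statement's English description precedes it below -/
import Mathlib

section
/- Let k be any field, and let M = x_1^{a_1}⋯x_n^{a_n} and M' be monomials in k[x_1,…,x_n] with M' < M in the lexicographic order with x_1 > … > x_n, and suppose a_i < char(k) for all i (equivalently, a_i! is invertible in k for all i). Then for every m-tuple k = (k_1,…,k_m) ∈ ℕ^m for which Pol_k(M) and Pol_k(M') are nonzero, the leading monomial of Pol_k(M') is strictly smaller than the leading monomial of Pol_k(M) with respect to the lexicographic order on k[x_i^{(j)}] with x_1^{(1)} > x_1^{(2)} > … > x_1^{(m)} > x_2^{(1)} > … > x_n^{(m)}. -/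
open MvPolynomial

/-- The polarization `Pol_κ(f)`: the coefficient of `t₁^{κ₁} ⋯ t_m^{κ_m}` in `Φ(f)` where
`Φ : k[x₁,…,xₙ] → k[x_i^{(j)}][t₁,…,t_m]` is the algebra map sending `x_i ↦ Σ_j x_i^{(j)} t_j`.
The variables `x_i^{(j)}` are indexed by `emb i j : σ`. -/
noncomputable def Pol {k : Type*} [CommSemiring k] {n m : ℕ} {σ : Type*}
    (emb : Fin n → Fin m → σ) (f : MvPolynomial (Fin n) k) (κ : Fin m → ℕ) :
    MvPolynomial σ k :=
  MvPolynomial.coeff (Finsupp.equivFunOnFinite.symm κ)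
    (MvPolynomial.aeval
      (fun i => ∑ j : Fin m, (MvPolynomial.C (MvPolynomial.X (emb i j)) * MvPolynomial.X j :
        MvPolynomial (Fin m) (MvPolynomial σ k))) f)

/-- The leading monomial (exponent vector) of a polynomial with respect to the lexicographic
order where variables with smaller index in `σ` are larger (junk value `0` for `f = 0`). -/
noncomputable def leadM {k : Type*} [CommSemiring k] {σ : Type*}
    [LinearOrder σ] (f : MvPolynomial σ k) : Lex (σ →₀ ℕ) :=
  letI : DecidableEq (Lex (σ →₀ ℕ)) := Classical.decEq _
  ((f.support.image (toLex : (σ →₀ ℕ) → Lex (σ →₀ ℕ))).max).unbotD (toLex 0)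

open Finset


open Finset

theorem Finsupp.lex_lt_iff {α N : Type*} [Zero N] [LT α] [LT N] {a b : Lex (α →₀ N)} :
    a < b ↔ ∃ i, (∀ j, j < i → ofLex a j = ofLex b j) ∧ ofLex a i < ofLex b i := by
  exact Finsupp.Lex.lt_iff

namespace LeadMPol

/-- extend a function on `Fin n` to `ℕ` by zero -/
def ext (n : ℕ) (a : Fin n → ℕ) (i : ℕ) : ℕ := if h : i < n then a ⟨i, h⟩ else 0

/-- partial sums -/
def psum (f : ℕ → ℕ) (i : ℕ) : ℕ := ∑ x ∈ Finset.range i, f x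

lemma psum_zero (f : ℕ → ℕ) : psum f 0 = 0 := by simp [psum]

lemma psum_succ (f : ℕ → ℕ) (i : ℕ) : psum f (i + 1) = psum f i + f i := by
  simp [psum, Finset.sum_range_succ]

lemma psum_mono (f : ℕ → ℕ) {i j : ℕ} (h : i ≤ j) : psum f i ≤ psum f j :=
  Finset.sum_le_sum_of_subset (Finset.range_subset_range.2 h)

lemma ext_val {n : ℕ} (a : Fin n → ℕ) (i : Fin n) : ext n a i.val = a i := by
  simp [ext]

lemma psum_ext_top {n : ℕ} (a : Fin n → ℕ) : psum (ext n a) n = ∑ i : Fin n, a i := by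
  rw [psum, ← Fin.sum_univ_eq_sum_range (ext n a) n]
  exact Finset.sum_congr rfl fun i _ => ext_val a i

lemma sum_ite_val_eq {m : ℕ} (f : Fin m → ℕ) (J : ℕ) :
    (∑ j : Fin m, if j.val = J then f j else 0) = if h : J < m then f ⟨J, h⟩ else 0 := by
  split_ifs with h
  · rw [Finset.sum_eq_single ⟨J, h⟩]
    · simp
    · intro b _ hb; rw [if_neg]; intro hv; exact hb (Fin.ext hv)
    · intro hmem; exact absurd (Finset.mem_univ _) hmem
  · apply Finset.sum_eq_zero; intro j _; rw [if_neg]; intro hv; exact h (hv ▸ j.isLt)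

lemma sum_ite_lt_succ {m : ℕ} (f : Fin m → ℕ) (J : ℕ) :
    (∑ j : Fin m, if j.val < J + 1 then f j else 0)
      = (∑ j : Fin m, if j.val < J then f j else 0) + (if h : J < m then f ⟨J, h⟩ else 0) := by
  rw [← sum_ite_val_eq f J, ← Finset.sum_add_distrib]
  apply Finset.sum_congr rfl; intro j _
  by_cases h1 : j.val < J
  · rw [if_pos h1, if_pos (by omega), if_neg (by omega), add_zero]
  · by_cases h2 : j.val = J
    · rw [if_pos (by omega), if_neg h1, if_pos h2, zero_add]
    · rw [if_neg (by omega), if_neg h1, if_neg h2]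

variable {n m : ℕ}

/-- The northwest corner matrix. -/
def nw (a : Fin n → ℕ) (κ : Fin m → ℕ) (i : Fin n) (j : Fin m) : ℕ :=
  (min (psum (ext n a) (i.val + 1)) (psum (ext m κ) (j.val + 1))
      + min (psum (ext n a) i.val) (psum (ext m κ) j.val))
    - (min (psum (ext n a) i.val) (psum (ext m κ) (j.val + 1))
      + min (psum (ext n a) (i.val + 1)) (psum (ext m κ) j.val))

/-- partial row sums of the nw matrix -/
lemma nw_rowpartial (a : Fin n → ℕ) (κ : Fin m → ℕ) (i : Fin n) (J : ℕ) :
    (∑ j : Fin m, if j.val < J then nw a κ i j else 0)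
        + min (psum (ext n a) i.val) (psum (ext m κ) J)
      = min (psum (ext n a) (i.val + 1)) (psum (ext m κ) J) := by
  induction J with
  | zero => simp [psum_zero]
  | succ J ih =>
    rw [sum_ite_lt_succ]
    by_cases hJ : J < m
    · rw [dif_pos hJ]
      have hKs : psum (ext m κ) (J + 1) = psum (ext m κ) J + κ ⟨J, hJ⟩ := by
        rw [psum_succ]; congr 1; exact ext_val κ ⟨J, hJ⟩
      have hAs : psum (ext n a) i.val ≤ psum (ext n a) (i.val + 1) := psum_mono _ (by omega)
      rw [nw] at *
      simp only [show (⟨J, hJ⟩ : Fin m).val = J from rfl] at *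
      omega
    · have hKs : psum (ext m κ) (J + 1) = psum (ext m κ) J := by
        rw [psum_succ, ext, dif_neg hJ]; omega
      rw [dif_neg hJ, hKs, add_zero]
      exact ih

/-- partial column sums of the nw matrix -/
lemma nw_colpartial (a : Fin n → ℕ) (κ : Fin m → ℕ) (j : Fin m) (I : ℕ) :
    (∑ i : Fin n, if i.val < I then nw a κ i j else 0)
        + min (psum (ext n a) I) (psum (ext m κ) j.val)
      = min (psum (ext n a) I) (psum (ext m κ) (j.val + 1)) := by
  induction I with
  | zero => simp [psum_zero]
  | succ I ih =>
    rw [sum_ite_lt_succ]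
    by_cases hI : I < n
    · rw [dif_pos hI]
      have hAs : psum (ext n a) (I + 1) = psum (ext n a) I + a ⟨I, hI⟩ := by
        rw [psum_succ]; congr 1; exact ext_val a ⟨I, hI⟩
      have hKs : psum (ext m κ) j.val ≤ psum (ext m κ) (j.val + 1) := psum_mono _ (by omega)
      rw [nw] at *
      simp only [show (⟨I, hI⟩ : Fin n).val = I from rfl] at *
      omega
    · have hAs : psum (ext n a) (I + 1) = psum (ext n a) I := by
        rw [psum_succ, ext, dif_neg hI]; omega
      rw [dif_neg hI, hAs, add_zero]
      exact ih

lemma nw_rowsum (a : Fin n → ℕ) (κ : Fin m → ℕ)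
    (hT : ∑ i : Fin n, a i = ∑ j : Fin m, κ j) (i : Fin n) :
    ∑ j : Fin m, nw a κ i j = a i := by
  have h := nw_rowpartial a κ i m
  have hall : (∑ j : Fin m, if j.val < m then nw a κ i j else 0) = ∑ j : Fin m, nw a κ i j :=
    Finset.sum_congr rfl fun j _ => if_pos j.isLt
  rw [hall] at h
  have hKm : psum (ext m κ) m = ∑ i : Fin n, a i := by rw [psum_ext_top, hT]
  have h1 : psum (ext n a) i.val ≤ ∑ i : Fin n, a i := by
    rw [← psum_ext_top]; exact psum_mono _ (by omega)
  have h2 : psum (ext n a) (i.val + 1) ≤ ∑ i : Fin n, a i := by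
    rw [← psum_ext_top]; exact psum_mono _ (by omega)
  have h3 : psum (ext n a) (i.val + 1) = psum (ext n a) i.val + a i := by
    rw [psum_succ]; congr 1; exact ext_val a i
  omega

lemma nw_colsum (a : Fin n → ℕ) (κ : Fin m → ℕ)
    (hT : ∑ i : Fin n, a i = ∑ j : Fin m, κ j) (j : Fin m) :
    ∑ i : Fin n, nw a κ i j = κ j := by
  have h := nw_colpartial a κ j n
  have hall : (∑ i : Fin n, if i.val < n then nw a κ i j else 0) = ∑ i : Fin n, nw a κ i j :=
    Finset.sum_congr rfl fun i _ => if_pos i.isLt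
  rw [hall] at h
  have hAn : psum (ext n a) n = ∑ j : Fin m, κ j := by rw [psum_ext_top, hT]
  have h1 : psum (ext m κ) j.val ≤ ∑ j : Fin m, κ j := by
    rw [← psum_ext_top]; exact psum_mono _ (by omega)
  have h2 : psum (ext m κ) (j.val + 1) ≤ ∑ j : Fin m, κ j := by
    rw [← psum_ext_top]; exact psum_mono _ (by omega)
  have h3 : psum (ext m κ) (j.val + 1) = psum (ext m κ) j.val + κ j := by
    rw [psum_succ]; congr 1; exact ext_val κ j
  omega


/-- the exponent finsupp of the monomial attached to a matrix -/
noncomputable def mono (n m : ℕ) (D : Fin n → Fin m → ℕ) : Lex (Fin n × Fin m) →₀ ℕ :=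
  Finsupp.equivFunOnFinite.symm (fun p => D (ofLex p).1 (ofLex p).2)

lemma mono_apply {n m : ℕ} (D : Fin n → Fin m → ℕ) (p : Lex (Fin n × Fin m)) :
    mono n m D p = D (ofLex p).1 (ofLex p).2 :=
  congrFun (Finsupp.coe_equivFunOnFinite_symm _) _

lemma mono_inj {n m : ℕ} : Function.Injective (mono n m) := by
  intro D D' h
  funext i j
  have := DFunLike.congr_fun h (toLex (i, j))
  rwa [mono_apply, mono_apply] at this

lemma nw_max {n m : ℕ} (a : Fin n → ℕ) (κ : Fin m → ℕ)
    (hT : ∑ i : Fin n, a i = ∑ j : Fin m, κ j) (D : Fin n → Fin m → ℕ)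
    (hrow : ∀ i, ∑ j : Fin m, D i j = a i) (hcol : ∀ j, ∑ i : Fin n, D i j = κ j)
    (hne : D ≠ nw a κ) :
    toLex (mono n m D) < toLex (mono n m (nw a κ)) := by
  classical
  set T : Finset (Lex (Fin n × Fin m)) :=
    univ.filter (fun p => D (ofLex p).1 (ofLex p).2 ≠ nw a κ (ofLex p).1 (ofLex p).2) with hT_def
  have hTne : T.Nonempty := by
    rw [Function.ne_iff] at hne
    obtain ⟨i, hi⟩ := hne
    rw [Function.ne_iff] at hi
    obtain ⟨j, hj⟩ := hi
    exact ⟨toLex (i, j), by simpa [hT_def] using hj⟩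
  set p0 := T.min' hTne with hp0_def
  set i0 := (ofLex p0).1 with hi0
  set j0 := (ofLex p0).2 with hj0
  have hp0T : p0 ∈ T := T.min'_mem hTne
  have hne0 : D i0 j0 ≠ nw a κ i0 j0 := by
    simpa [hT_def] using hp0T
  have hpre : ∀ q : Lex (Fin n × Fin m), q < p0 →
      D (ofLex q).1 (ofLex q).2 = nw a κ (ofLex q).1 (ofLex q).2 := by
    intro q hq
    by_contra hc
    exact absurd (T.min'_le q (by simpa [hT_def] using hc)) (not_le.2 hq)
  have hp0eq : p0 = toLex (i0, j0) := rfl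
  -- prefix equalities
  have hRP : (∑ j : Fin m, if j.val < j0.val then D i0 j else 0)
      = (∑ j : Fin m, if j.val < j0.val then nw a κ i0 j else 0) := by
    apply Finset.sum_congr rfl
    intro j _
    by_cases h : j.val < j0.val
    · rw [if_pos h, if_pos h]
      exact hpre (toLex (i0, j)) (by
        rw [hp0eq]
        exact Prod.Lex.lt_iff.2 (Or.inr ⟨rfl, by rwa [Fin.lt_def]⟩))
    · rw [if_neg h, if_neg h]
  have hCP : (∑ i : Fin n, if i.val < i0.val then D i j0 else 0)
      = (∑ i : Fin n, if i.val < i0.val then nw a κ i j0 else 0) := by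
    apply Finset.sum_congr rfl
    intro i _
    by_cases h : i.val < i0.val
    · rw [if_pos h, if_pos h]
      exact hpre (toLex (i, j0)) (by
        rw [hp0eq]
        exact Prod.Lex.lt_iff.2 (Or.inl (by rwa [Fin.lt_def])))
    · rw [if_neg h, if_neg h]
  -- bounds
  have hDj0 : D i0 j0 = ∑ j : Fin m, if j.val = j0.val then D i0 j else 0 := by
    rw [sum_ite_val_eq, dif_pos j0.isLt]
  have hrb : (∑ j : Fin m, if j.val < j0.val then D i0 j else 0) + D i0 j0 ≤ a i0 := by
    rw [← hrow i0, hDj0, ← Finset.sum_add_distrib]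
    apply Finset.sum_le_sum
    intro j _
    split_ifs <;> omega
  have hDi0 : D i0 j0 = ∑ i : Fin n, if i.val = i0.val then D i j0 else 0 := by
    rw [sum_ite_val_eq, dif_pos i0.isLt]
  have hcb : (∑ i : Fin n, if i.val < i0.val then D i j0 else 0) + D i0 j0 ≤ κ j0 := by
    rw [← hcol j0, hDi0, ← Finset.sum_add_distrib]
    apply Finset.sum_le_sum
    intro i _
    split_ifs <;> omega
  -- key inequality
  have hkey : D i0 j0 < nw a κ i0 j0 := by
    have F1 := nw_rowpartial a κ i0 j0.val
    have F2 := nw_colpartial a κ j0 i0.val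
    rw [← hRP] at F1
    rw [← hCP] at F2
    have hAs : psum (ext n a) (i0.val + 1) = psum (ext n a) i0.val + a i0 := by
      rw [psum_succ]; congr 1; exact ext_val a i0
    have hKs : psum (ext m κ) (j0.val + 1) = psum (ext m κ) j0.val + κ j0 := by
      rw [psum_succ]; congr 1; exact ext_val κ j0
    rw [nw] at hne0 ⊢
    omega
  rw [Finsupp.lex_lt_iff]
  refine ⟨p0, fun q hq => ?_, ?_⟩
  · rw [ofLex_toLex, ofLex_toLex, mono_apply, mono_apply]
    exact hpre q hq
  · rw [ofLex_toLex, ofLex_toLex, mono_apply, mono_apply]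
    exact hkey

lemma nw_lt_nw {n m : ℕ} (a a' : Fin n → ℕ) (κ : Fin m → ℕ)
    (hT : ∑ i : Fin n, a i = ∑ j : Fin m, κ j)
    (hT' : ∑ i : Fin n, a' i = ∑ j : Fin m, κ j)
    (i0 : Fin n) (hpre : ∀ i, i < i0 → a' i = a i) (hlt : a' i0 < a i0) :
    toLex (mono n m (nw a' κ)) < toLex (mono n m (nw a κ)) := by
  classical
  have hA : ∀ I, I ≤ i0.val → psum (ext n a') I = psum (ext n a) I := by
    intro I hI
    apply Finset.sum_congr rfl
    intro x hx
    rw [Finset.mem_range] at hx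
    unfold ext
    split_ifs with h
    · have hxlt : x < i0.val := by omega
      exact hpre ⟨x, h⟩ (by simpa [Fin.lt_def] using hxlt)
    · rfl
  have hA1 : psum (ext n a') (i0.val + 1) = psum (ext n a) i0.val + a' i0 := by
    rw [psum_succ, hA i0.val le_rfl]; congr 1; exact ext_val a' i0
  have hA1' : psum (ext n a) (i0.val + 1) = psum (ext n a) i0.val + a i0 := by
    rw [psum_succ]; congr 1; exact ext_val a i0
  -- rows before i0 agree
  have hroweq : ∀ i : Fin n, i < i0 → ∀ j, nw a' κ i j = nw a κ i j := by
    intro i hi j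
    rw [Fin.lt_def] at hi
    rw [nw, nw, hA i.val (by omega), hA (i.val + 1) (by omega)]
  -- entrywise inequality in row i0
  have hentry : ∀ j, nw a' κ i0 j ≤ nw a κ i0 j := by
    intro j
    have hK : psum (ext m κ) j.val ≤ psum (ext m κ) (j.val + 1) := psum_mono _ (by omega)
    rw [nw, nw, hA i0.val le_rfl, hA1, hA1']
    omega
  -- row sums differ
  have hsum' : ∑ j : Fin m, nw a' κ i0 j = a' i0 := nw_rowsum a' κ hT' i0
  have hsum : ∑ j : Fin m, nw a κ i0 j = a i0 := nw_rowsum a κ hT i0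
  set J : Finset (Fin m) := univ.filter (fun j => nw a' κ i0 j ≠ nw a κ i0 j) with hJ_def
  have hJne : J.Nonempty := by
    by_contra hc
    rw [Finset.not_nonempty_iff_eq_empty] at hc
    have : ∑ j : Fin m, nw a' κ i0 j = ∑ j : Fin m, nw a κ i0 j := by
      apply Finset.sum_congr rfl
      intro j _
      by_contra hne
      have : j ∈ J := by simpa [hJ_def] using hne
      simp [hc] at this
    omega
  set j0 := J.min' hJne with hj0_def
  have hj0J : j0 ∈ J := J.min'_mem hJne
  have hne0 : nw a' κ i0 j0 ≠ nw a κ i0 j0 := by simpa [hJ_def] using hj0J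
  rw [Finsupp.lex_lt_iff]
  refine ⟨toLex (i0, j0), fun q hq => ?_, ?_⟩
  · rw [ofLex_toLex, ofLex_toLex, mono_apply, mono_apply]
    have hq' := Prod.Lex.lt_iff.1 hq
    rcases hq' with h | ⟨h1, h2⟩
    · exact hroweq _ h _
    · have : (ofLex q).2 ∉ J := fun hmem => absurd (J.min'_le _ hmem) (not_le.2 h2)
      have h3 : nw a' κ i0 (ofLex q).2 = nw a κ i0 (ofLex q).2 := by
        simpa [hJ_def] using this
      rw [h1]
      exact h3
  · rw [ofLex_toLex, ofLex_toLex, mono_apply, mono_apply]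
    exact lt_of_le_of_ne (hentry j0) hne0

section Algebra

lemma prod_X_pow_eq {τ R : Type*} [Fintype τ] [CommSemiring R] (g : τ → ℕ) :
    (∏ t : τ, (X t : MvPolynomial τ R) ^ g t)
      = monomial (Finsupp.equivFunOnFinite.symm g) 1 := by
  rw [monomial_eq, C_1, one_mul, Finsupp.prod_pow]
  exact Finset.prod_congr rfl fun t _ => by rw [Finsupp.coe_equivFunOnFinite_symm]

lemma prod_lex {n m : ℕ} {M : Type*} [CommMonoid M] (F : Lex (Fin n × Fin m) → M) :
    ∏ p : Lex (Fin n × Fin m), F p = ∏ i : Fin n, ∏ j : Fin m, F (toLex (i, j)) := by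
  rw [← Equiv.prod_comp (toLex : Fin n × Fin m ≃ Lex (Fin n × Fin m)) F]
  exact Fintype.prod_prod_type _

lemma mono_prod {n m : ℕ} {R : Type*} [CommSemiring R] (D : Fin n → Fin m → ℕ) :
    ∏ i : Fin n, ∏ j : Fin m, (X (toLex (i, j)) : MvPolynomial (Lex (Fin n × Fin m)) R) ^ D i j
      = monomial (mono n m D) 1 := by
  rw [mono, ← prod_X_pow_eq, prod_lex]
  rfl

/-- the multinomial coefficient attached to a matrix -/
def cD {n m : ℕ} (D : Fin n → Fin m → ℕ) : ℕ :=
  ∏ i : Fin n, Nat.multinomial Finset.univ (D i)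

/-- the index set of the representation of `Pol` of a monomial -/
noncomputable def SS {n m : ℕ} (a : Fin n →₀ ℕ) (κ : Fin m → ℕ) :
    Finset (Fin n → Fin m → ℕ) :=
  (Fintype.piFinset (fun i => Finset.univ.piAntidiag (a i))).filter
    (fun D => ∀ j, ∑ i : Fin n, D i j = κ j)

lemma summand {n m : ℕ} {k : Type} [CommSemiring k] (D : Fin n → Fin m → ℕ) :
    (∏ i : Fin n, ((Nat.multinomial Finset.univ (D i) :
          MvPolynomial (Fin m) (MvPolynomial (Lex (Fin n × Fin m)) k))
        * ∏ j : Fin m, (C (X (toLex (i, j))) * X j) ^ D i j))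
      = monomial (Finsupp.equivFunOnFinite.symm (fun j => ∑ i : Fin n, D i j))
          (monomial (mono n m D) ((cD D : k))) := by
  rw [Finset.prod_mul_distrib]
  have h1 : (∏ i : Fin n, (Nat.multinomial Finset.univ (D i) :
      MvPolynomial (Fin m) (MvPolynomial (Lex (Fin n × Fin m)) k)))
      = C (C ((cD D : k))) := by
    rw [← Nat.cast_prod, ← cD, map_natCast (C : k →+* MvPolynomial (Lex (Fin n × Fin m)) k),
      map_natCast (C : MvPolynomial (Lex (Fin n × Fin m)) k →+* MvPolynomial (Fin m) (MvPolynomial (Lex (Fin n × Fin m)) k))]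
  rw [h1]
  have h2 : (∏ i : Fin n, ∏ j : Fin m,
        ((C (X (toLex (i, j))) : MvPolynomial (Fin m) (MvPolynomial (Lex (Fin n × Fin m)) k))
          * X j) ^ D i j)
      = C (monomial (mono n m D) (1 : k)) *
          monomial (Finsupp.equivFunOnFinite.symm (fun j => ∑ i : Fin n, D i j)) 1 := by
    simp_rw [mul_pow, ← C_pow, Finset.prod_mul_distrib, ← map_prod]
    rw [mono_prod]
    congr 1
    rw [Finset.prod_comm]
    simp_rw [Finset.prod_pow_eq_pow_sum]
    exact prod_X_pow_eq _
  rw [h2, ← mul_assoc, ← map_mul, C_mul_monomial, mul_one, C_mul_monomial, mul_one]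


lemma pol_monomial_eq {n m : ℕ} {k : Type} [CommSemiring k] (a : Fin n →₀ ℕ) (κ : Fin m → ℕ) :
    Pol (fun i j => toLex (i, j) : Fin n → Fin m → Lex (Fin n × Fin m)) (monomial a (1 : k)) κ
      = ∑ D ∈ SS a κ, monomial (mono n m D) ((cD D : k)) := by
  classical
  rw [Pol, aeval_monomial, map_one, one_mul, Finsupp.prod_pow]
  have hexp : ∀ i : Fin n,
      (∑ j : Fin m, (C (X (toLex (i, j))) * X j :
          MvPolynomial (Fin m) (MvPolynomial (Lex (Fin n × Fin m)) k))) ^ a i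
        = ∑ d ∈ Finset.univ.piAntidiag (a i),
            (Nat.multinomial Finset.univ d :
              MvPolynomial (Fin m) (MvPolynomial (Lex (Fin n × Fin m)) k))
              * ∏ j : Fin m, (C (X (toLex (i, j))) * X j) ^ d j :=
    fun i => Finset.sum_pow_eq_sum_piAntidiag _ _ _
  rw [Finset.prod_congr rfl (fun i _ => hexp i), Finset.prod_univ_sum]
  rw [Finset.sum_congr rfl (fun D _ => summand (k := k) D)]
  rw [MvPolynomial.coeff_sum]
  rw [SS, Finset.sum_filter]
  apply Finset.sum_congr rfl
  intro D _
  rw [MvPolynomial.coeff_monomial]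
  by_cases h : ∀ j, ∑ i : Fin n, D i j = κ j
  · rw [if_pos, if_pos h]
    congr 1
    exact funext h
  · rw [if_neg, if_neg h]
    intro he
    exact h (funext_iff.1 (Finsupp.equivFunOnFinite.symm.injective he))

lemma coeff_pol_of_mem {n m : ℕ} {k : Type} [CommSemiring k] (a : Fin n →₀ ℕ)
    (κ : Fin m → ℕ) {D0 : Fin n → Fin m → ℕ} (hD0 : D0 ∈ SS a κ) :
    MvPolynomial.coeff (mono n m D0)
      (Pol (fun i j => toLex (i, j) : Fin n → Fin m → Lex (Fin n × Fin m))
        (monomial a (1 : k)) κ) = (cD D0 : k) := by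
  classical
  rw [pol_monomial_eq, MvPolynomial.coeff_sum, Finset.sum_eq_single D0]
  · rw [coeff_monomial, if_pos rfl]
  · intro D _ hne
    rw [coeff_monomial, if_neg (fun he => hne (mono_inj he))]
  · intro h; exact absurd hD0 h

lemma support_pol {n m : ℕ} {k : Type} [CommSemiring k] (a : Fin n →₀ ℕ)
    (κ : Fin m → ℕ) {b : Lex (Fin n × Fin m) →₀ ℕ}
    (hb : b ∈ (Pol (fun i j => toLex (i, j) : Fin n → Fin m → Lex (Fin n × Fin m))
      (monomial a (1 : k)) κ).support) :
    ∃ D ∈ SS a κ, mono n m D = b := by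
  classical
  by_contra hc
  push_neg at hc
  rw [MvPolynomial.mem_support_iff] at hb
  apply hb
  rw [pol_monomial_eq, MvPolynomial.coeff_sum]
  apply Finset.sum_eq_zero
  intro D hD
  rw [coeff_monomial, if_neg (hc D hD)]

lemma mem_SS_iff {n m : ℕ} (a : Fin n →₀ ℕ) (κ : Fin m → ℕ) (D : Fin n → Fin m → ℕ) :
    D ∈ SS a κ ↔ (∀ i, ∑ j : Fin m, D i j = a i) ∧ (∀ j, ∑ i : Fin n, D i j = κ j) := by
  classical
  rw [SS, Finset.mem_filter, Fintype.mem_piFinset]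
  constructor
  · rintro ⟨h1, h2⟩
    exact ⟨fun i => (Finset.mem_piAntidiag.1 (h1 i)).1, h2⟩
  · rintro ⟨h1, h2⟩
    exact ⟨fun i => Finset.mem_piAntidiag.2 ⟨h1 i, fun j _ => Finset.mem_univ j⟩, h2⟩

lemma sum_eq_of_pol_ne_zero {n m : ℕ} {k : Type} [CommSemiring k] (a : Fin n →₀ ℕ)
    (κ : Fin m → ℕ)
    (h : Pol (fun i j => toLex (i, j) : Fin n → Fin m → Lex (Fin n × Fin m))
      (monomial a (1 : k)) κ ≠ 0) :
    ∑ i : Fin n, a i = ∑ j : Fin m, κ j := by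
  classical
  have hne : (SS a κ).Nonempty := by
    by_contra hc
    rw [Finset.not_nonempty_iff_eq_empty] at hc
    apply h
    rw [pol_monomial_eq, hc, Finset.sum_empty]
  obtain ⟨D, hD⟩ := hne
  obtain ⟨h1, h2⟩ := (mem_SS_iff a κ D).1 hD
  calc ∑ i : Fin n, a i = ∑ i : Fin n, ∑ j : Fin m, D i j :=
        Finset.sum_congr rfl fun i _ => (h1 i).symm
    _ = ∑ j : Fin m, ∑ i : Fin n, D i j := Finset.sum_comm
    _ = ∑ j : Fin m, κ j := Finset.sum_congr rfl fun j _ => h2 j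

lemma nw_mem_SS {n m : ℕ} (a : Fin n →₀ ℕ) (κ : Fin m → ℕ)
    (hT : ∑ i : Fin n, a i = ∑ j : Fin m, κ j) :
    nw (⇑a) κ ∈ SS a κ :=
  (mem_SS_iff a κ _).2 ⟨nw_rowsum (⇑a) κ hT, nw_colsum (⇑a) κ hT⟩

lemma cD_nw_ne_zero {n m : ℕ} {k : Type} [Field k] (a : Fin n →₀ ℕ) (κ : Fin m → ℕ)
    (hfac : ∀ i : Fin n, IsUnit ((a i).factorial : k))
    (hT : ∑ i : Fin n, a i = ∑ j : Fin m, κ j) :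
    (cD (nw (⇑a) κ) : k) ≠ 0 := by
  rw [cD, Nat.cast_prod]
  rw [Finset.prod_ne_zero_iff]
  intro i _
  have hs := Nat.multinomial_spec (f := nw (⇑a) κ i) (s := Finset.univ)
  have hcast : ((∏ j : Fin m, (nw (⇑a) κ i j).factorial : ℕ) : k)
      * (Nat.multinomial Finset.univ (nw (⇑a) κ i) : k) = ((a i).factorial : k) := by
    rw [← Nat.cast_mul, hs, nw_rowsum (⇑a) κ hT i]
  intro h0
  rw [h0, mul_zero] at hcast
  exact (hfac i).ne_zero hcast.symm

lemma leadM_pol_eq {n m : ℕ} {k : Type} [Field k] (a : Fin n →₀ ℕ) (κ : Fin m → ℕ)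
    (hfac : ∀ i : Fin n, IsUnit ((a i).factorial : k))
    (hT : ∑ i : Fin n, a i = ∑ j : Fin m, κ j) :
    leadM (Pol (fun i j => toLex (i, j) : Fin n → Fin m → Lex (Fin n × Fin m))
        (monomial a (1 : k)) κ)
      = toLex (mono n m (nw (⇑a) κ)) := by
  letI : DecidableEq (Lex ((Lex (Fin n × Fin m)) →₀ ℕ)) := Classical.decEq _
  set P := Pol (fun i j => toLex (i, j) : Fin n → Fin m → Lex (Fin n × Fin m))
    (monomial a (1 : k)) κ with hP
  have hmem : mono n m (nw (⇑a) κ) ∈ P.support := by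
    rw [MvPolynomial.mem_support_iff, hP, coeff_pol_of_mem a κ (nw_mem_SS a κ hT)]
    exact cD_nw_ne_zero a κ hfac hT
  have hmax : ∀ b ∈ P.support, toLex b ≤ toLex (mono n m (nw (⇑a) κ)) := by
    intro b hb
    obtain ⟨D, hD, rfl⟩ := support_pol a κ hb
    obtain ⟨h1, h2⟩ := (mem_SS_iff a κ D).1 hD
    rcases eq_or_ne D (nw (⇑a) κ) with rfl | hne
    · exact le_rfl
    · exact le_of_lt (nw_max (⇑a) κ hT D h1 h2 hne)
  have hmaxeq : (P.support.image (toLex : ((Lex (Fin n × Fin m)) →₀ ℕ) → _)).max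
      = WithBot.some (toLex (mono n m (nw (⇑a) κ))) := by
    apply le_antisymm
    · apply Finset.max_le
      intro y hy
      obtain ⟨b, hb, rfl⟩ := Finset.mem_image.1 hy
      exact_mod_cast hmax b hb
    · exact Finset.le_max (Finset.mem_image_of_mem _ hmem)
  rw [leadM, hmaxeq]
  rfl

lemma leadM_pol_le {n m : ℕ} {k : Type} [Field k] (a : Fin n →₀ ℕ) (κ : Fin m → ℕ)
    (hT : ∑ i : Fin n, a i = ∑ j : Fin m, κ j)
    (hne : Pol (fun i j => toLex (i, j) : Fin n → Fin m → Lex (Fin n × Fin m))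
      (monomial a (1 : k)) κ ≠ 0) :
    leadM (Pol (fun i j => toLex (i, j) : Fin n → Fin m → Lex (Fin n × Fin m))
        (monomial a (1 : k)) κ)
      ≤ toLex (mono n m (nw (⇑a) κ)) := by
  letI : DecidableEq (Lex ((Lex (Fin n × Fin m)) →₀ ℕ)) := Classical.decEq _
  set P := Pol (fun i j => toLex (i, j) : Fin n → Fin m → Lex (Fin n × Fin m))
    (monomial a (1 : k)) κ with hP
  have hsupp : P.support.Nonempty := by
    rw [MvPolynomial.support_nonempty]
    exact hne
  have himg : (P.support.image (toLex : ((Lex (Fin n × Fin m)) →₀ ℕ) → _)).Nonempty :=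
    hsupp.image _
  have hcoe := Finset.coe_max' himg
  have : leadM P = (P.support.image (toLex : ((Lex (Fin n × Fin m)) →₀ ℕ) → _)).max' himg := by
    rw [leadM, ← hcoe]
    rfl
  rw [this]
  have hm := Finset.max'_mem _ himg
  obtain ⟨b, hb, hbe⟩ := Finset.mem_image.1 hm
  rw [← hbe]
  obtain ⟨D, hD, rfl⟩ := support_pol a κ hb
  obtain ⟨h1, h2⟩ := (mem_SS_iff a κ D).1 hD
  rcases eq_or_ne D (nw (⇑a) κ) with rfl | hneD
  · exact le_rfl
  · exact le_of_lt (nw_max (⇑a) κ hT D h1 h2 hneD)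

end Algebra

end LeadMPol

/-- over any field, for monomials `M = x₁^{a₁}⋯xₙ^{aₙ}` and `M'` with `M' < M` of
`k[x₁,…,xₙ]` in the lex order with `x₁ > ⋯ > xₙ`, if each `a_i!` is invertible in `k`
(equivalently `a_i < char k` when the characteristic is positive), then for any `κ ∈ ℕᵐ` with
`Pol_κ(M) ≠ 0` and `Pol_κ(M') ≠ 0` one has `LeadM(Pol_κ(M')) < LeadM(Pol_κ(M))`
in the lex order on `k[x_i^{(j)}]` with
`x₁^{(1)} > x₁^{(2)} > ⋯ > x₁^{(m)} > x₂^{(1)} > ⋯ > xₙ^{(m)}`. -/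
theorem leadM_pol_lt_of_lt_of_factorial_isUnit (k : Type) [Field k] (n m : ℕ)
    (a a' : Fin n →₀ ℕ) (hfac : ∀ i : Fin n, IsUnit ((a i).factorial : k))
    (hlt : toLex a' < toLex a) (κ : Fin m → ℕ)
    (hM : Pol (fun i j => toLex (i, j) : Fin n → Fin m → Lex (Fin n × Fin m))
      (monomial a (1 : k)) κ ≠ 0)
    (hM' : Pol (fun i j => toLex (i, j) : Fin n → Fin m → Lex (Fin n × Fin m))
      (monomial a' (1 : k)) κ ≠ 0) :
    leadM (Pol (fun i j => toLex (i, j) : Fin n → Fin m → Lex (Fin n × Fin m))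
        (monomial a' (1 : k)) κ) <
      leadM (Pol (fun i j => toLex (i, j) : Fin n → Fin m → Lex (Fin n × Fin m))
        (monomial a (1 : k)) κ) := by
  
  have hT := LeadMPol.sum_eq_of_pol_ne_zero a κ hM
  have hT' := LeadMPol.sum_eq_of_pol_ne_zero a' κ hM'
  obtain ⟨i0, hpre, hlt0⟩ := Finsupp.lex_lt_iff.1 hlt
  have hcmp := LeadMPol.nw_lt_nw (⇑a) (⇑a') κ hT hT' i0 (fun i hi => hpre i hi) hlt0
  calc leadM (Pol (fun i j => toLex (i, j) : Fin n → Fin m → Lex (Fin n × Fin m))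
        (monomial a' (1 : k)) κ)
      ≤ toLex (LeadMPol.mono n m (LeadMPol.nw (⇑a') κ)) :=
        LeadMPol.leadM_pol_le a' κ hT' hM'
    _ < toLex (LeadMPol.mono n m (LeadMPol.nw (⇑a) κ)) := hcmp
    _ = leadM (Pol (fun i j => toLex (i, j) : Fin n → Fin m → Lex (Fin n × Fin m))
        (monomial a (1 : k)) κ) := (LeadMPol.leadM_pol_eq a κ hfac hT).symm
end

section
/- Let G ≤ S_n be a permutation group acting naturally on V = k^n. Then the lead term ideal of the Hilbert ideal I(G,V), with respect to the lexicographic order on k[x_1,…,x_n] with x_1 > x_2 > … > x_n, contains the monomial ideal (x_1, x_2^2, x_3^3, …, x_n^n); in particular x_i^i ∈ Lead(I(G,V)) for all 1 ≤ i ≤ n. -/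
open MvPolynomial

lemma sum_single_eq (n : ℕ) (t : Fin n) (c : ℕ) : (∑ j, Finsupp.single t c j) = c := by
  simp [Finsupp.single_apply]

noncomputable def myH (k : Type) [Field k] (n : ℕ) : ℕ → ℕ → MvPolynomial (Fin n) k
  | 0, _ => 1
  | d+1, m => ∑ t : Fin n, if m ≤ (t : ℕ) then X t * myH k n d (t : ℕ) else 0

lemma coeff_myH (k : Type) [Field k] (n : ℕ) (d m : ℕ) (a : Fin n →₀ ℕ) :
    coeff a (myH k n d m) =
      if (∑ j, a j) = d ∧ (∀ j : Fin n, a j ≠ 0 → m ≤ (j : ℕ)) then 1 else 0 := by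
  induction d generalizing m a with
  | zero =>
    rw [myH]
    by_cases h : a = 0
    · subst h; simp
    · have h1 : ¬ (∑ j, a j) = 0 := by
        intro hs
        apply h
        ext j
        exact Finset.sum_eq_zero_iff.mp hs j (Finset.mem_univ j)
      rw [MvPolynomial.coeff_one]
      simp [h1, eq_comm, h]
  | succ d ih =>
    rw [myH, MvPolynomial.coeff_sum]
    classical
    by_cases h : a = 0
    · subst h
      simp [apply_ite (coeff (0 : Fin n →₀ ℕ)), MvPolynomial.coeff_X_mul']
    · have hne : a.support.Nonempty := Finsupp.support_nonempty_iff.mpr h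
      set t₀ := a.support.min' hne with ht₀
      have ht₀mem : t₀ ∈ a.support := a.support.min'_mem hne
      have ht₀min : ∀ j ∈ a.support, t₀ ≤ j := fun j hj => a.support.min'_le j hj
      have ht₀ne : a t₀ ≠ 0 := Finsupp.mem_support_iff.mp ht₀mem
      have hsingle_le : Finsupp.single t₀ 1 ≤ a := by
        rw [Finsupp.single_le_iff]
        exact Nat.one_le_iff_ne_zero.mpr ht₀ne
      have hdecomp : a = (a - Finsupp.single t₀ 1) + Finsupp.single t₀ 1 :=
        (tsub_add_cancel_of_le hsingle_le).symm
      have hsum : (∑ j, a j) = (∑ j, (a - Finsupp.single t₀ 1 : Fin n →₀ ℕ) j) + 1 := by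
        conv_lhs => rw [hdecomp]
        simp [Finsupp.add_apply, Finset.sum_add_distrib, sum_single_eq]
      have hsub_apply : ∀ (t j : Fin n), j ≠ t → (a - Finsupp.single t 1 : Fin n →₀ ℕ) j = a j := by
        intro t j hj
        rw [Finsupp.tsub_apply, Finsupp.single_apply, if_neg (fun he => hj he.symm), Nat.sub_zero]
      rw [Finset.sum_eq_single_of_mem t₀ (Finset.mem_univ t₀)]
      · -- the t₀ term
        have hcond2 : ∀ j : Fin n, (a - Finsupp.single t₀ 1 : Fin n →₀ ℕ) j ≠ 0 → (t₀ : ℕ) ≤ (j : ℕ) := by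
          intro j hj
          have : a j ≠ 0 := by
            intro h0
            apply hj
            rw [Finsupp.tsub_apply, h0]
            exact Nat.zero_sub _
          exact_mod_cast Fin.le_def.mp (ht₀min j (Finsupp.mem_support_iff.mpr this))
        by_cases hm : m ≤ (t₀ : ℕ)
        · rw [if_pos hm, MvPolynomial.coeff_X_mul', if_pos ht₀mem, ih]
          have hiff : ((∑ j, (a - Finsupp.single t₀ 1 : Fin n →₀ ℕ) j) = d ∧
              (∀ j : Fin n, (a - Finsupp.single t₀ 1 : Fin n →₀ ℕ) j ≠ 0 → (t₀ : ℕ) ≤ (j : ℕ))) ↔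
              ((∑ j, a j) = d + 1 ∧ (∀ j : Fin n, a j ≠ 0 → m ≤ (j : ℕ))) := by
            constructor
            · rintro ⟨h1, -⟩
              refine ⟨by omega, fun j hj => le_trans hm ?_⟩
              exact_mod_cast Fin.le_def.mp (ht₀min j (Finsupp.mem_support_iff.mpr hj))
            · rintro ⟨h1, -⟩
              exact ⟨by omega, hcond2⟩
          rw [if_congr hiff rfl rfl]
        · rw [if_neg hm, if_neg, MvPolynomial.coeff_zero]
          rintro ⟨-, h2⟩
          exact hm (h2 t₀ ht₀ne)
      · -- other terms vanish
        intro t _ htne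
        by_cases hm : m ≤ (t : ℕ)
        · rw [if_pos hm, MvPolynomial.coeff_X_mul']
          by_cases hts : t ∈ a.support
          · rw [if_pos hts, ih, if_neg]
            rintro ⟨-, h2⟩
            have ht₀lt : t₀ < t := lt_of_le_of_ne (ht₀min t hts) (Ne.symm htne)
            have : (a - Finsupp.single t 1 : Fin n →₀ ℕ) t₀ ≠ 0 := by
              rw [hsub_apply t t₀ (ne_of_lt ht₀lt)]
              exact ht₀ne
            have := h2 t₀ this
            have : (t : ℕ) ≤ (t₀ : ℕ) := this
            exact absurd (Fin.lt_def.mp ht₀lt) (not_lt.mpr this)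
          · rw [if_neg hts]
        · rw [if_neg hm]
          exact MvPolynomial.coeff_zero _

lemma myH_zero (k : Type) [Field k] (n : ℕ) (d m : ℕ) (hd : 1 ≤ d) (hm : n ≤ m) :
    myH k n d m = 0 := by
  ext a
  rw [coeff_myH, MvPolynomial.coeff_zero, if_neg]
  rintro ⟨h1, h2⟩
  by_cases h : a = 0
  · subst h; simp at h1; omega
  · obtain ⟨j, hj⟩ := Finsupp.support_nonempty_iff.mpr h
    have := h2 j (Finsupp.mem_support_iff.mp hj)
    have := j.isLt
    omega

lemma myH_rec (k : Type) [Field k] (n : ℕ) (d m : ℕ) (hm : m < n) :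
    myH k n (d+1) m = X (⟨m, hm⟩ : Fin n) * myH k n d m + myH k n (d+1) (m+1) := by
  conv_lhs => rw [myH]
  conv_rhs => rw [myH]
  have key : ∀ t : Fin n,
      (if m ≤ (t : ℕ) then X t * myH k n d (t : ℕ) else 0) =
      (if t = (⟨m, hm⟩ : Fin n) then X t * myH k n d (t : ℕ) else 0) +
      (if m + 1 ≤ (t : ℕ) then X t * myH k n d (t : ℕ) else 0) := by
    intro t
    by_cases h1 : t = (⟨m, hm⟩ : Fin n)
    · subst h1
      simp
    · have h2 : (t : ℕ) ≠ m := fun he => h1 (Fin.ext he)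
      by_cases h3 : m ≤ (t : ℕ)
      · rw [if_pos h3, if_neg h1, if_pos (by omega), zero_add]
      · rw [if_neg h3, if_neg h1, if_neg (by omega), zero_add]
  rw [Finset.sum_congr rfl (fun t _ => key t), Finset.sum_add_distrib]
  congr 1
  rw [Finset.sum_ite_eq' Finset.univ (⟨m, hm⟩ : Fin n)]
  simp

/-- The lead term ideal of an ideal `I`: the ideal generated by the leading monomials of
all nonzero elements of `I`. -/
noncomputable def leadIdeal {k : Type*} [CommSemiring k] {σ : Type*} [LinearOrder σ]
    (I : Ideal (MvPolynomial σ k)) : Ideal (MvPolynomial σ k) :=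
  Ideal.span {p | ∃ f ∈ I, f ≠ 0 ∧ p = monomial (ofLex (leadM f)) (1 : k)}

lemma leadM_eq_of {k : Type*} [CommSemiring k] {σ : Type*} [LinearOrder σ]
    {f : MvPolynomial σ k} {a : σ →₀ ℕ} (h1 : a ∈ f.support)
    (h2 : ∀ b ∈ f.support, toLex b ≤ toLex a) : leadM f = toLex a := by
  have hmax : ∀ (inst : DecidableEq (Lex (σ →₀ ℕ))),
      (@Finset.image _ _ inst (toLex : (σ →₀ ℕ) → Lex (σ →₀ ℕ)) f.support).max
      = ((toLex a : Lex (σ →₀ ℕ)) : WithBot (Lex (σ →₀ ℕ))) := by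
    intro inst
    apply le_antisymm
    · apply Finset.max_le
      intro b hb
      obtain ⟨c, hc, rfl⟩ := Finset.mem_image.mp hb
      exact WithBot.coe_le_coe.mpr (h2 c hc)
    · exact Finset.le_max (Finset.mem_image_of_mem _ h1)
  unfold leadM
  rw [hmax]
  rfl

lemma myH_invariant (k : Type) [Field k] (n : ℕ) (d : ℕ) (e : Equiv.Perm (Fin n)) :
    rename (fun i => e i) (myH k n d 0) = myH k n d 0 := by
  apply MvPolynomial.ext
  intro a
  have ha : a = Finsupp.mapDomain (fun i => e i) (Finsupp.mapDomain (⇑e.symm) a) := by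
    rw [← Finsupp.mapDomain_comp]
    have : (fun i => e i) ∘ ⇑e.symm = id := by
      funext j; simp
    rw [this, Finsupp.mapDomain_id]
  conv_lhs => rw [ha, MvPolynomial.coeff_rename_mapDomain _ e.injective]
  rw [coeff_myH, coeff_myH]
  have hpt : ∀ j, Finsupp.mapDomain (⇑e.symm) a j = a (e j) := by
    intro j
    rw [← Finsupp.equivMapDomain_eq_mapDomain, Finsupp.equivMapDomain_apply]
    simp
  have hsum : (∑ j, Finsupp.mapDomain (⇑e.symm) a j) = ∑ j, a j := by
    rw [Finset.sum_congr rfl (fun j _ => hpt j)]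
    exact Equiv.sum_comp e (fun j => a j)
  have hiff : ((∑ j, Finsupp.mapDomain (⇑e.symm) a j) = d ∧
      (∀ j : Fin n, Finsupp.mapDomain (⇑e.symm) a j ≠ 0 → 0 ≤ (j : ℕ))) ↔
      ((∑ j, a j) = d ∧ (∀ j : Fin n, a j ≠ 0 → 0 ≤ (j : ℕ))) := by
    rw [hsum]
    simp [Nat.zero_le]
  rw [if_congr hiff rfl rfl]

lemma myH_mem (k : Type) [Field k] (n : ℕ) (G : Subgroup (Equiv.Perm (Fin n))) :
    ∀ m d : ℕ, m + 1 ≤ d →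
      myH k n d m ∈ Ideal.span {h : MvPolynomial (Fin n) k |
        (∀ g ∈ G, rename (fun i => g⁻¹ i) h = h) ∧ constantCoeff h = 0} := by
  intro m
  induction m with
  | zero =>
    intro d hd
    apply Ideal.subset_span
    refine ⟨fun g _ => myH_invariant k n d g⁻¹, ?_⟩
    have h0 : constantCoeff (myH k n d 0) = coeff 0 (myH k n d 0) := rfl
    rw [h0, coeff_myH, if_neg]
    rintro ⟨h1, -⟩
    simp only [Finsupp.coe_zero, Pi.zero_apply, Finset.sum_const_zero] at h1
    omega
  | succ m ih =>
    intro d hd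
    by_cases hm : m < n
    · obtain ⟨d', rfl⟩ : ∃ d', d = d' + 1 := ⟨d - 1, by omega⟩
      have hr : myH k n (d'+1) (m+1) =
          myH k n (d'+1) m - X (⟨m, hm⟩ : Fin n) * myH k n d' m := by
        rw [myH_rec k n d' m hm]; ring
      rw [hr]
      exact Ideal.sub_mem _ (ih _ (by omega)) (Ideal.mul_mem_left _ _ (ih _ (by omega)))
    · rw [myH_zero k n d (m+1) (by omega) (by omega)]
      exact Ideal.zero_mem _

/-- for a permutation group `G ≤ Sₙ` acting naturally on `V = kⁿ`, the lead
term ideal of the Hilbert ideal `I(G,V)` with respect to the lex order with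
`x₁ > x₂ > ⋯ > xₙ` contains the monomial ideal `(x₁, x₂², …, xₙⁿ)`; in particular
`x_i^i ∈ Lead(I(G,V))` for all `i` (here `i : Fin n` encodes the `1`-based index `i+1`). -/
theorem powers_le_leadIdeal_hilbert (k : Type) [Field k] (n : ℕ)
    (G : Subgroup (Equiv.Perm (Fin n))) :
    Ideal.span {p : MvPolynomial (Fin n) k |
        ∃ i : Fin n, p = monomial (Finsupp.single i ((i : ℕ) + 1)) (1 : k)} ≤
      leadIdeal (Ideal.span {h : MvPolynomial (Fin n) k |
        (∀ g ∈ G, rename (fun i => g⁻¹ i) h = h) ∧ constantCoeff h = 0}) := by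
  rw [Ideal.span_le]
  rintro p ⟨i, rfl⟩
  have hcoeff : coeff (Finsupp.single i ((i : ℕ) + 1)) (myH k n ((i : ℕ) + 1) (i : ℕ)) = 1 := by
    rw [coeff_myH, if_pos]
    refine ⟨sum_single_eq n i _, ?_⟩
    intro j hj
    rw [Finsupp.single_apply] at hj
    by_cases hij : i = j
    · subst hij; exact le_refl _
    · rw [if_neg hij] at hj; exact absurd rfl hj
  have hmem1 : (Finsupp.single i ((i : ℕ) + 1)) ∈ (myH k n ((i : ℕ) + 1) (i : ℕ)).support :=
    MvPolynomial.mem_support_iff.mpr (by rw [hcoeff]; exact one_ne_zero)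
  have hne : myH k n ((i : ℕ) + 1) (i : ℕ) ≠ 0 := by
    intro h0
    rw [h0] at hmem1
    simp at hmem1
  have hlead : leadM (myH k n ((i : ℕ) + 1) (i : ℕ)) = toLex (Finsupp.single i ((i : ℕ) + 1)) := by
    apply leadM_eq_of hmem1
    intro b hb
    rw [MvPolynomial.mem_support_iff, coeff_myH] at hb
    by_cases hbe : b = Finsupp.single i ((i : ℕ) + 1)
    · exact le_of_eq (congrArg toLex hbe)
    have hcond : (∑ j, b j) = (i : ℕ) + 1 ∧ ∀ j : Fin n, b j ≠ 0 → (i : ℕ) ≤ (j : ℕ) := by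
      by_contra hc; rw [if_neg hc] at hb; exact hb rfl
    obtain ⟨hbs, hbsupp⟩ := hcond
    have hble : b i ≤ (i : ℕ) + 1 :=
      hbs ▸ Finset.single_le_sum (fun j _ => Nat.zero_le _) (Finset.mem_univ i)
    have hbi : b i < (i : ℕ) + 1 := by
      rcases lt_or_eq_of_le hble with hlt | heq
      · exact hlt
      · exfalso
        apply hbe
        have hadd : b i + ∑ j ∈ Finset.univ.erase i, b j = ∑ j, b j :=
          Finset.add_sum_erase Finset.univ (fun j => b j) (Finset.mem_univ i)
        have hrest : ∑ j ∈ Finset.univ.erase i, b j = 0 := by omega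
        ext j
        by_cases hji : j = i
        · subst hji; rw [heq, Finsupp.single_apply, if_pos rfl]
        · rw [Finsupp.single_apply, if_neg (fun he => hji he.symm)]
          exact Finset.sum_eq_zero_iff.mp hrest j (Finset.mem_erase.mpr ⟨hji, Finset.mem_univ j⟩)
    apply le_of_lt
    rw [Finsupp.Lex.lt_iff]
    refine ⟨i, ?_, ?_⟩
    · intro j hji
      have hj0 : b j = 0 := by
        by_contra hb0
        have h1 := hbsupp j hb0
        have h2 : (j : ℕ) < (i : ℕ) := Fin.lt_def.mp hji
        omega
      show b j = Finsupp.single i ((i : ℕ) + 1) j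
      rw [hj0, Finsupp.single_apply, if_neg (fun he => (ne_of_lt hji) he.symm)]
    · show b i < Finsupp.single i ((i : ℕ) + 1) i
      simpa [Finsupp.single_apply] using hbi
  apply Ideal.subset_span
  exact ⟨myH k n ((i : ℕ) + 1) (i : ℕ), myH_mem k n G (i : ℕ) ((i : ℕ) + 1) (le_refl _), hne,
    by rw [hlead]; rfl⟩
end
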